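/- Let X and Y be complex Banach spaces, A ∈ B(X), B ∈ B(Y), C ∈ B(Y, X), and let M_C ∈ B(X ⊕ Y) be the upper-triangular operator matrix M_C(x, y) = (Ax + Cy, By). If A is Drazin invertible, then M_C has finite ascent if and only if B has finite ascent, and M_C has finite descent if and only if B has finite descent. -/

import Mathlib

noncomputable section

open ContinuousLinearMap Metric Set

variable {E : Type*} [NormedAddCommGroup E] [NormedSpace ℂ E]
variable {X Y : Type*} [NormedAddCommGroup X] [NormedSpace ℂ X] [CompleteSpace X]
  [NormedAddCommGroup Y] [NormedSpace ℂ Y] [CompleteSpace Y]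

/-- `T` has finite ascent: some power has the same kernel as the next one. -/
def HasFiniteAscent (T : E →L[ℂ] E) : Prop :=
  ∃ k : ℕ, LinearMap.ker ((T ^ k : E →L[ℂ] E) : E →ₗ[ℂ] E) = LinearMap.ker ((T ^ (k + 1) : E →L[ℂ] E) : E →ₗ[ℂ] E)

/-- `T` has finite descent: some power has the same range as the next one. -/
def HasFiniteDescent (T : E →L[ℂ] E) : Prop :=
  ∃ k : ℕ, LinearMap.range ((T ^ k : E →L[ℂ] E) : E →ₗ[ℂ] E) = LinearMap.range ((T ^ (k + 1) : E →L[ℂ] E) : E →ₗ[ℂ] E)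

/-- `T` is Drazin invertible. -/
def IsDrazinInvertible (T : E →L[ℂ] E) : Prop :=
  ∃ S : E →L[ℂ] E, ∃ k : ℕ, T * S = S * T ∧ S * T * S = S ∧ T ^ (k + 1) * S = T ^ k

/-- The upper-triangular operator matrix `M_C (x, y) = (A x + C y, B y)` on `X ⊕ Y`. -/
def ucMat (A : X →L[ℂ] X) (B : Y →L[ℂ] Y) (C : Y →L[ℂ] X) :
    (X × Y) →L[ℂ] (X × Y) :=
  (A.comp (ContinuousLinearMap.fst ℂ X Y) + C.comp (ContinuousLinearMap.snd ℂ X Y)).prod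
    (B.comp (ContinuousLinearMap.snd ℂ X Y))

/-! ### Auxiliary lemmas -/

lemma pow_add_apply (T : E →L[ℂ] E) (m n : ℕ) (x : E) :
    (T ^ (m + n)) x = (T ^ m) ((T ^ n) x) := by
  rw [pow_add]; rfl

/-- If the kernels of `T^a` and `T^(a+1)` coincide, the kernel chain stabilizes. -/
lemma ker_stab {T : E →L[ℂ] E} {a : ℕ}
    (h : LinearMap.ker ((T ^ a : E →L[ℂ] E) : E →ₗ[ℂ] E) = LinearMap.ker ((T ^ (a + 1) : E →L[ℂ] E) : E →ₗ[ℂ] E)) :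
    ∀ j (y : E), (T ^ (a + j)) y = 0 → (T ^ a) y = 0 := by
  intro j
  induction j with
  | zero => intro y hy; simpa using hy
  | succ j ih =>
    intro y hy
    apply ih
    have h1 : (T ^ (a + 1)) ((T ^ j) y) = 0 := by
      rw [← pow_add_apply]
      have e : a + 1 + j = a + (j + 1) := by ring
      rw [e]; exact hy
    have h2 : (T ^ j) y ∈ LinearMap.ker ((T ^ (a + 1) : E →L[ℂ] E) : E →ₗ[ℂ] E) := h1
    rw [← h] at h2
    have h3 : (T ^ a) ((T ^ j) y) = 0 := h2
    rwa [← pow_add_apply] at h3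

/-- The off-diagonal entry of powers of `ucMat`. -/
def Fm (A : X →L[ℂ] X) (B : Y →L[ℂ] Y) (C : Y →L[ℂ] X) : ℕ → (Y →L[ℂ] X)
  | 0 => 0
  | (n + 1) => A.comp (Fm A B C n) + C.comp (B ^ n)

lemma ucMat_apply (A : X →L[ℂ] X) (B : Y →L[ℂ] Y) (C : Y →L[ℂ] X) (x : X) (y : Y) :
    ucMat A B C (x, y) = (A x + C y, B y) := rfl

lemma ucMat_pow_apply (A : X →L[ℂ] X) (B : Y →L[ℂ] Y) (C : Y →L[ℂ] X) (n : ℕ) (x : X) (y : Y) :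
    ((ucMat A B C) ^ n) (x, y) = ((A ^ n) x + Fm A B C n y, (B ^ n) y) := by
  induction n with
  | zero => simp [Fm]
  | succ n ih =>
    rw [pow_succ', ContinuousLinearMap.mul_apply, ih, ucMat_apply]
    simp [Fm, pow_succ', ContinuousLinearMap.mul_apply, map_add, add_assoc]

lemma Fm_of_ker {A : X →L[ℂ] X} {B : Y →L[ℂ] Y} {C : Y →L[ℂ] X} {c : ℕ} {y : Y}
    (hy : (B ^ c) y = 0) : ∀ j, Fm A B C (c + j) y = (A ^ j) (Fm A B C c y) := by
  intro j
  induction j with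
  | zero => simp
  | succ j ih =>
    have e : c + (j + 1) = (c + j) + 1 := by ring
    rw [e]
    show A (Fm A B C (c + j) y) + C ((B ^ (c + j)) y) = _
    have hb : (B ^ (c + j)) y = 0 := by
      rw [add_comm, pow_add_apply, hy, map_zero]
    rw [hb, map_zero, add_zero, ih, pow_succ', ContinuousLinearMap.mul_apply]

lemma Fm_sub {A : X →L[ℂ] X} {B : Y →L[ℂ] Y} {C : Y →L[ℂ] X} {c : ℕ} {y y' : Y}
    (h : (B ^ (c + 1)) y' = (B ^ c) y) :
    ∀ j, Fm A B C (c + j) y - Fm A B C (c + j + 1) y' =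
      (A ^ j) (Fm A B C c y - Fm A B C (c + 1) y') := by
  intro j
  induction j with
  | zero => simp
  | succ j ih =>
    have e1 : c + (j + 1) = (c + j) + 1 := by ring
    rw [e1]
    show (A (Fm A B C (c + j) y) + C ((B ^ (c + j)) y)) -
        (A (Fm A B C (c + j + 1) y') + C ((B ^ (c + j + 1)) y')) = _
    have hb : (B ^ (c + j)) y = (B ^ (c + j + 1)) y' := by
      have l : (B ^ (c + j)) y = (B ^ j) ((B ^ c) y) := by
        rw [show c + j = j + c by ring, pow_add_apply]
      have r : (B ^ (c + j + 1)) y' = (B ^ j) ((B ^ (c + 1)) y') := by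
        rw [show c + j + 1 = j + (c + 1) by ring, pow_add_apply]
      rw [l, r, h]
    rw [hb]
    have : (A (Fm A B C (c + j) y) + C ((B ^ (c + j + 1)) y')) -
        (A (Fm A B C (c + j + 1) y') + C ((B ^ (c + j + 1)) y')) =
        A (Fm A B C (c + j) y - Fm A B C (c + j + 1) y') := by
      rw [map_sub]; abel
    rw [this, ih, pow_succ', ContinuousLinearMap.mul_apply]

theorem stmt4 (A : X →L[ℂ] X) (B : Y →L[ℂ] Y) (C : Y →L[ℂ] X) (hA : IsDrazinInvertible A) :
    (HasFiniteAscent (ucMat A B C) ↔ HasFiniteAscent B) ∧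
      (HasFiniteDescent (ucMat A B C) ↔ HasFiniteDescent B) := by
  obtain ⟨S, k, hc, -, h3⟩ := hA
  have hco : Commute A S := hc
  set M := ucMat A B C with hM
  -- `A^(k+c) * S^c = A^k`
  have pow_drazin : ∀ c : ℕ, A ^ (k + c) * S ^ c = A ^ k := by
    intro c
    induction c with
    | zero => simp
    | succ c ih =>
      calc A ^ (k + (c + 1)) * S ^ (c + 1)
          = (A ^ c * A ^ (k + 1)) * (S * S ^ c) := by
            rw [show k + (c + 1) = c + (k + 1) by ring, pow_add, pow_succ' S c]
        _ = A ^ c * ((A ^ (k + 1) * S) * S ^ c) := by simp only [mul_assoc]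
        _ = (A ^ c * A ^ k) * S ^ c := by rw [h3, ← mul_assoc]
        _ = A ^ (k + c) * S ^ c := by rw [← pow_add, add_comm c k]
        _ = A ^ k := ih
  -- injectivity modulo index: `A^(k+1) v = 0 → A^k v = 0`
  have hinj : ∀ v : X, (A ^ (k + 1)) v = 0 → (A ^ k) v = 0 := by
    intro v hv
    have hSA : S * A ^ (k + 1) = A ^ k := by
      rw [(hco.symm.pow_right (k + 1)).eq, h3]
    calc (A ^ k) v = (S * A ^ (k + 1)) v := by rw [hSA]
      _ = S ((A ^ (k + 1)) v) := rfl
      _ = 0 := by rw [hv, map_zero]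
  -- the "lower" lemma: if `B^c y = 0` then `(x, y) ∈ ker M^(c+k)` for a suitable `x`.
  have lower : ∀ (c : ℕ) (y : Y), (B ^ c) y = 0 →
      (M ^ (c + k)) (-(S ^ c) (Fm A B C c y), y) = 0 := by
    intro c y hy
    rw [ucMat_pow_apply]
    have hsnd : (B ^ (c + k)) y = 0 := by
      rw [add_comm, pow_add_apply, hy, map_zero]
    have hFm : Fm A B C (c + k) y = (A ^ k) (Fm A B C c y) := Fm_of_ker hy k
    have hfst : (A ^ (c + k)) (-(S ^ c) (Fm A B C c y)) + Fm A B C (c + k) y = 0 := by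
      rw [hFm, map_neg]
      have : (A ^ (c + k)) ((S ^ c) (Fm A B C c y)) = (A ^ k) (Fm A B C c y) := by
        calc (A ^ (c + k)) ((S ^ c) (Fm A B C c y))
            = (A ^ (k + c) * S ^ c) (Fm A B C c y) := by rw [add_comm c k]; rfl
          _ = (A ^ k) (Fm A B C c y) := by rw [pow_drazin c]
      rw [this, neg_add_cancel]
    rw [hfst, hsnd]
    rfl
  constructor
  · -- ascent
    constructor
    · rintro ⟨n, hn⟩
      refine ⟨n, le_antisymm ?_ ?_⟩
      · intro y hy
        have hy' : (B ^ n) y = 0 := hy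
        show (B ^ (n + 1)) y = 0
        rw [pow_succ', ContinuousLinearMap.mul_apply, hy', map_zero]
      · intro y hy
        have hy1 : (B ^ (n + 1)) y = 0 := hy
        have hker := lower (n + 1) y hy1
        have e : n + 1 + k = n + (k + 1) := by ring
        rw [e] at hker
        have h0 := ker_stab hn (k + 1) _ hker
        rw [ucMat_pow_apply] at h0
        show (B ^ n) y = 0
        have := congrArg Prod.snd h0
        simpa using this
    · rintro ⟨a, ha⟩
      refine ⟨a + k, le_antisymm ?_ ?_⟩
      · intro z hz
        have hz' : (M ^ (a + k)) z = 0 := hz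
        show (M ^ (a + k + 1)) z = 0
        rw [pow_succ', ContinuousLinearMap.mul_apply, hz', map_zero]
      · rintro ⟨x, y⟩ hz
        have hz' : (M ^ (a + k + 1)) (x, y) = 0 := hz
        rw [ucMat_pow_apply] at hz'
        rw [Prod.ext_iff] at hz'
        obtain ⟨h1, h2⟩ := hz'
        simp only at h1 h2
        have hy2 : (B ^ (a + (k + 1))) y = 0 := by rw [show a + (k+1) = a + k + 1 by ring]; exact h2
        have hBay : (B ^ a) y = 0 := ker_stab ha (k + 1) y hy2
        have hF : Fm A B C (a + (k + 1)) y = (A ^ (k + 1)) (Fm A B C a y) :=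
          Fm_of_ker hBay (k + 1)
        have hAx : (A ^ (a + k + 1)) x = (A ^ (k + 1)) ((A ^ a) x) := by
          rw [show a + k + 1 = (k + 1) + a by ring, pow_add_apply]
        have hkey : (A ^ (k + 1)) ((A ^ a) x + Fm A B C a y) = 0 := by
          rw [map_add, ← hAx, ← hF, show a + (k + 1) = a + k + 1 by ring]
          exact h1
        have hk0 : (A ^ k) ((A ^ a) x + Fm A B C a y) = 0 := hinj _ hkey
        show (M ^ (a + k)) (x, y) = 0
        rw [ucMat_pow_apply]
        have hfst : (A ^ (a + k)) x + Fm A B C (a + k) y = 0 := by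
          rw [show a + k = k + a by ring, pow_add_apply,
            show k + a = a + k by ring, Fm_of_ker hBay k, ← map_add]
          exact hk0
        have hsnd : (B ^ (a + k)) y = 0 := by
          rw [show a + k = k + a by ring, pow_add_apply, hBay, map_zero]
        rw [hfst, hsnd]
        rfl
  · -- descent
    constructor
    · rintro ⟨n, hn⟩
      refine ⟨n, le_antisymm ?_ ?_⟩
      · rintro z ⟨y, rfl⟩
        have hmem : ((M ^ n) (0, y)) ∈ LinearMap.range ((M ^ n : (X × Y) →L[ℂ] (X × Y)) : (X × Y) →ₗ[ℂ] (X × Y)) := ⟨(0, y), rfl⟩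
        rw [hn] at hmem
        obtain ⟨⟨x', y'⟩, hp⟩ := hmem
        refine ⟨y', ?_⟩
        have := congrArg Prod.snd hp
        simp only [ContinuousLinearMap.coe_coe] at this ⊢
        rw [ucMat_pow_apply, ucMat_pow_apply] at this
        simpa using this
      · rintro z ⟨y, rfl⟩
        exact ⟨B y, by simp only [ContinuousLinearMap.coe_coe]; rw [← ContinuousLinearMap.mul_apply, ← pow_succ]⟩
    · rintro ⟨d, hd⟩
      refine ⟨d + k, le_antisymm ?_ ?_⟩
      · rintro z ⟨⟨x, y⟩, rfl⟩
        have hmem : (B ^ d) y ∈ LinearMap.range ((B ^ (d + 1) : Y →L[ℂ] Y) : Y →ₗ[ℂ] Y) := by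
          rw [← hd]; exact ⟨y, rfl⟩
        obtain ⟨y', hy'⟩ := hmem
        simp only [ContinuousLinearMap.coe_coe] at hy'
        set u := Fm A B C d y - Fm A B C (d + 1) y' with hu
        refine ⟨((S ^ (d + 1)) ((A ^ d) x + u), y'), ?_⟩
        simp only [ContinuousLinearMap.coe_coe]
        rw [ucMat_pow_apply, ucMat_pow_apply]
        have hsnd : (B ^ (d + k + 1)) y' = (B ^ (d + k)) y := by
          rw [show d + k + 1 = k + (d + 1) by ring, pow_add_apply, hy',
            show d + k = k + d by ring, pow_add_apply]
        have hFd : Fm A B C (d + k) y - Fm A B C (d + k + 1) y' = (A ^ k) u :=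
          Fm_sub hy' k
        have hfst : (A ^ (d + k + 1)) ((S ^ (d + 1)) ((A ^ d) x + u)) +
            Fm A B C (d + k + 1) y' = (A ^ (d + k)) x + Fm A B C (d + k) y := by
          have h1 : (A ^ (d + k + 1)) ((S ^ (d + 1)) ((A ^ d) x + u)) =
              (A ^ k) ((A ^ d) x + u) := by
            calc (A ^ (d + k + 1)) ((S ^ (d + 1)) ((A ^ d) x + u))
                = (A ^ (k + (d + 1)) * S ^ (d + 1)) ((A ^ d) x + u) := by
                  rw [show d + k + 1 = k + (d + 1) by ring]; rfl
              _ = (A ^ k) ((A ^ d) x + u) := by rw [pow_drazin (d + 1)]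
          rw [h1, map_add]
          have h2 : (A ^ k) ((A ^ d) x) = (A ^ (d + k)) x := by
            rw [show d + k = k + d by ring, pow_add_apply]
          have h3 : (A ^ k) u = Fm A B C (d + k) y - Fm A B C (d + k + 1) y' := hFd.symm
          rw [h2, h3]
          abel
        rw [Prod.ext_iff]
        exact ⟨hfst, hsnd⟩
      · rintro z ⟨p, rfl⟩
        exact ⟨M p, by simp only [ContinuousLinearMap.coe_coe]; rw [← ContinuousLinearMap.mul_apply, ← pow_succ]⟩
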